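/- Let A be an abelian category with enough projectives and (C, T, F) a cotorsion torsion triple. Then C ∩ T is a tilting subcategory of A. -/

import Mathlib

open CategoryTheory Category Limits

attribute [local instance] CategoryTheory.Abelian.hasFiniteBiproducts
attribute [local instance] CategoryTheory.Limits.HasFiniteBiproducts.of_hasFiniteProducts

universe w v u

namespace Paper

variable {A : Type u} [Category.{v} A] [Abelian A]

/-- `IsSes i p` expresses that `0 ⟶ X ⟶ Y ⟶ Z ⟶ 0` is a short exact sequence. -/
def IsSes {X Y Z : A} (i : X ⟶ Y) (p : Y ⟶ Z) : Prop :=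
  ∃ w : i ≫ p = 0, (ShortComplex.mk i p w).ShortExact

/-- `Ext¹(X, Y) = 0`, phrased as: every extension of `X` by `Y` splits. -/
def Ext1Zero (X Y : A) : Prop :=
  ∀ ⦃E : A⦄ (i : Y ⟶ E) (p : E ⟶ X), IsSes i p → ∃ s : X ⟶ E, s ≫ p = 𝟙 X

/-- A torsion pair `(T, F)` of (strictly full) subcategories of an abelian category. -/
structure IsTorsionPair (T F : Set A) : Prop where
  isoClosed_torsion : ∀ {X Y : A}, (X ≅ Y) → X ∈ T → Y ∈ T
  isoClosed_torsionFree : ∀ {X Y : A}, (X ≅ Y) → X ∈ F → Y ∈ F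
  hom_zero : ∀ {X Y : A}, X ∈ T → Y ∈ F → ∀ f : X ⟶ Y, f = 0
  seq : ∀ X : A, ∃ (tX fX : A) (i : tX ⟶ X) (p : X ⟶ fX), tX ∈ T ∧ fX ∈ F ∧ IsSes i p

/-- A (complete) cotorsion pair `(C, D)` in an abelian category. -/
structure IsCotorsionPair (C D : Set A) : Prop where
  left_eq : C = {X : A | ∀ Y ∈ D, Ext1Zero X Y}
  right_eq : D = {Y : A | ∀ X ∈ C, Ext1Zero X Y}
  seq₁ : ∀ X : A, ∃ (dX cX : A) (i : dX ⟶ cX) (p : cX ⟶ X), dX ∈ D ∧ cX ∈ C ∧ IsSes i p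
  seq₂ : ∀ X : A, ∃ (dX cX : A) (i : X ⟶ dX) (p : dX ⟶ cX), dX ∈ D ∧ cX ∈ C ∧ IsSes i p

/-- `f` factors through some object belonging to the class `P`. -/
def FactorsThroughClass (P : Set A) {X Y : A} (f : X ⟶ Y) : Prop :=
  ∃ (Z : A) (_ : Z ∈ P) (a : X ⟶ Z) (b : Z ⟶ Y), a ≫ b = f

/-- The hom-relation on the full subcategory on `S` identifying two morphisms whose
difference factors through an object of `P`. -/
def quotRel (S P : Set A) : HomRel (ObjectProperty.FullSubcategory (· ∈ S)) :=
  fun {X Y} f g =>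
    FactorsThroughClass P ((show X.obj ⟶ Y.obj from f.hom) - (show X.obj ⟶ Y.obj from g.hom))

/-- The additive quotient of the full subcategory on `S` by the morphisms factoring
through objects of `P`. -/
abbrev AddQuot (S P : Set A) := CategoryTheory.Quotient (quotRel S P)

/-- The subcategory of quotients of (finite direct sums of) objects of `T`. -/
def Fac (T : Set A) : Set A := {X : A | ∃ Y ∈ T, ∃ p : Y ⟶ X, Epi p}

/-- The right `Hom`-orthogonal `T^⊥`. -/
def rightHomPerp (T : Set A) : Set A := {X : A | ∀ Y ∈ T, ∀ f : Y ⟶ X, f = 0}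

/-- The left `Hom`-orthogonal `^⊥F`. -/
def leftHomPerp (F : Set A) : Set A := {X : A | ∀ Y ∈ F, ∀ f : X ⟶ Y, f = 0}

/-- The right `Ext¹`-orthogonal `T^{⊥₁}`. -/
def rightExt1Perp (T : Set A) : Set A := {X : A | ∀ Y ∈ T, Ext1Zero Y X}

/-- The left `Ext¹`-orthogonal `^{⊥₁}D`. -/
def leftExt1Perp (D : Set A) : Set A := {X : A | ∀ Y ∈ D, Ext1Zero X Y}

/-- `X` has projective dimension at most one: it has a length-one projective resolution. -/
def PdLeOne (X : A) : Prop :=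
  ∃ (P₁ P₀ : A) (i : P₁ ⟶ P₀) (p : P₀ ⟶ X), Projective P₁ ∧ Projective P₀ ∧ IsSes i p

/-- A weak tilting subcategory of an abelian category with enough projectives. -/
structure IsWeakTilting (T : Set A) : Prop where
  sum_mem : ∀ {X Y : A}, X ∈ T → Y ∈ T → (X ⊞ Y) ∈ T
  summand_mem : ∀ {X Y : A}, X ∈ T → (∃ (s : Y ⟶ X) (r : X ⟶ Y), s ≫ r = 𝟙 Y) → Y ∈ T
  ext1_zero : ∀ {X Y : A}, X ∈ T → Y ∈ T → Ext1Zero X Y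
  pd_le_one : ∀ X ∈ T, PdLeOne X
  coresolution : ∀ P : A, Projective P → ∃ (T₀ T₁ : A) (i : P ⟶ T₀) (p : T₀ ⟶ T₁),
    T₀ ∈ T ∧ T₁ ∈ T ∧ IsSes i p

/-- `φ : X ⟶ E` is a right `T`-approximation of `E`. -/
def IsRightApprox (T : Set A) {X E : A} (φ : X ⟶ E) : Prop :=
  X ∈ T ∧ ∀ X' ∈ T, ∀ f : X' ⟶ E, ∃ g : X' ⟶ X, g ≫ φ = f

/-- A tilting subcategory: a weak tilting subcategory that is contravariantly finite. -/
structure IsTilting (T : Set A) extends IsWeakTilting T : Prop where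
  contravariantly_finite : ∀ E : A, ∃ (X : A) (φ : X ⟶ E), IsRightApprox T φ


-- basic unpacking
lemma IsSes.w {X Y Z : A} {i : X ⟶ Y} {p : Y ⟶ Z} (h : IsSes i p) : i ≫ p = 0 := h.choose

lemma IsSes.mono {X Y Z : A} {i : X ⟶ Y} {p : Y ⟶ Z} (h : IsSes i p) : Mono i :=
  h.choose_spec.mono_f

lemma IsSes.epi {X Y Z : A} {i : X ⟶ Y} {p : Y ⟶ Z} (h : IsSes i p) : Epi p :=
  h.choose_spec.epi_g

lemma IsSes.exact {X Y Z : A} {i : X ⟶ Y} {p : Y ⟶ Z} (h : IsSes i p) :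
    (ShortComplex.mk i p h.w).Exact := h.choose_spec.exact

/-- factor through the kernel -/
lemma IsSes.factor_lift {X Y Z W : A} {i : X ⟶ Y} {p : Y ⟶ Z} (h : IsSes i p)
    (k : W ⟶ Y) (hk : k ≫ p = 0) : ∃ l : W ⟶ X, l ≫ i = k := by
  have := h.mono
  exact h.exact.lift' k hk

/-- factor through the cokernel -/
lemma IsSes.factor_desc {X Y Z W : A} {i : X ⟶ Y} {p : Y ⟶ Z} (h : IsSes i p)
    (k : Y ⟶ W) (hk : i ≫ k = 0) : ∃ l : Z ⟶ W, p ≫ l = k := by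
  have := h.epi
  exact h.exact.desc' k hk

lemma isSes_kernel {Y Z : A} (p : Y ⟶ Z) [Epi p] : IsSes (kernel.ι p) p := by
  refine ⟨kernel.condition p, ?_⟩
  exact ShortComplex.ShortExact.mk'
    (ShortComplex.exact_of_f_is_kernel _ (kernelIsKernel p)) inferInstance inferInstance

lemma isSes_cokernel {X Y : A} (i : X ⟶ Y) [Mono i] : IsSes i (cokernel.π i) := by
  refine ⟨cokernel.condition i, ?_⟩
  exact ShortComplex.ShortExact.mk'
    (ShortComplex.exact_of_g_is_cokernel _ (cokernelIsCokernel i)) inferInstance inferInstance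

/-- retraction from a section for a ses -/
lemma IsSes.retraction_of_section {X Y Z : A} {i : X ⟶ Y} {p : Y ⟶ Z} (h : IsSes i p)
    {s : Z ⟶ Y} (hs : s ≫ p = 𝟙 Z) : ∃ r : Y ⟶ X, i ≫ r = 𝟙 X := by
  have hm := h.mono
  exact ⟨(ShortComplex.Splitting.ofExactOfSection _ h.exact s hs hm).r,
    (ShortComplex.Splitting.ofExactOfSection _ h.exact s hs hm).f_r⟩

/-- Pullback of a ses along a map into the cokernel. -/
lemma isSes_pullback {W E B B' : A} {w : W ⟶ E} {q : E ⟶ B} (h : IsSes w q) (f : B' ⟶ B) :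
    IsSes (pullback.lift w 0 (by rw [h.w, zero_comp]) : W ⟶ pullback q f) (pullback.snd q f) := by
  have := h.epi
  have hw0 : pullback.lift w 0 (by rw [h.w, zero_comp]) ≫ pullback.snd q f = 0 :=
    pullback.lift_snd _ _ _
  refine ⟨hw0, ?_⟩
  have hmono : Mono (pullback.lift w 0 (by rw [h.w, zero_comp]) : W ⟶ pullback q f) := by
    have : (pullback.lift w 0 (by rw [h.w, zero_comp]) : W ⟶ pullback q f) ≫ pullback.fst q f
        = w := pullback.lift_fst _ _ _
    have hm := h.mono
    rw [← this] at hm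
    exact mono_of_mono _ (pullback.fst q f)
  refine ShortComplex.ShortExact.mk' ?_ hmono inferInstance
  apply ShortComplex.exact_of_f_is_kernel
  apply KernelFork.IsLimit.ofι
  case lift =>
    intro W' g' hg'
    have h1 : (g' ≫ pullback.fst q f) ≫ q = 0 := by
      rw [assoc, pullback.condition, ← assoc, hg', zero_comp]
    exact (h.factor_lift _ h1).choose
  case fac =>
    intro W' g' hg'
    have h1 : (g' ≫ pullback.fst q f) ≫ q = 0 := by
      rw [assoc, pullback.condition, ← assoc, hg', zero_comp]
    apply pullback.hom_ext
    · dsimp only; rw [assoc, pullback.lift_fst]; exact (h.factor_lift _ h1).choose_spec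
    · dsimp only; rw [assoc, pullback.lift_snd, comp_zero]; exact hg'.symm
  case uniq =>
    intro W' g' hg' m hm
    have h1 : (g' ≫ pullback.fst q f) ≫ q = 0 := by
      rw [assoc, pullback.condition, ← assoc, hg', zero_comp]
    have hmw := h.mono
    have h2 : m ≫ w = g' ≫ pullback.fst q f := by
      have := hm =≫ pullback.fst q f
      rw [assoc, pullback.lift_fst] at this; exact this
    rw [← cancel_mono w, h2, (h.factor_lift _ h1).choose_spec]

/-- Pushout of a ses along a map out of the kernel. -/
lemma isSes_pushout {A₀ E C' A' : A} {a : A₀ ⟶ E} {p : E ⟶ C'} (h : IsSes a p) (f : A₀ ⟶ A') :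
    IsSes (pushout.inr a f)
      (pushout.desc p 0 (by rw [h.w, comp_zero]) : pushout a f ⟶ C') := by
  have hma := h.mono
  have hep := h.epi
  have hw0 : pushout.inr a f ≫ pushout.desc p 0 (by rw [h.w, comp_zero]) = 0 :=
    pushout.inr_desc _ _ _
  refine ⟨hw0, ?_⟩
  have hepi : Epi (pushout.desc p 0 (by rw [h.w, comp_zero]) : pushout a f ⟶ C') := by
    have : pushout.inl a f ≫ pushout.desc p 0 (by rw [h.w, comp_zero]) = p :=
      pushout.inl_desc _ _ _
    exact epi_of_epi_fac this
  refine ShortComplex.ShortExact.mk' ?_ inferInstance hepi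
  apply ShortComplex.exact_of_g_is_cokernel
  apply CokernelCofork.IsColimit.ofπ
  case desc =>
    intro Y x hx
    have h1 : a ≫ (pushout.inl a f ≫ x) = 0 := by
      rw [← assoc, pushout.condition, assoc, hx, comp_zero]
    exact (h.factor_desc _ h1).choose
  case fac =>
    intro Y x hx
    have h1 : a ≫ (pushout.inl a f ≫ x) = 0 := by
      rw [← assoc, pushout.condition, assoc, hx, comp_zero]
    apply pushout.hom_ext
    · rw [← assoc]
      rw [pushout.inl_desc]; exact (h.factor_desc _ h1).choose_spec
    · rw [← assoc]
      rw [pushout.inr_desc, zero_comp]; exact hx.symm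
  case uniq =>
    intro Y x hx m hm
    have h1 : a ≫ (pushout.inl a f ≫ x) = 0 := by
      rw [← assoc, pushout.condition, assoc, hx, comp_zero]
    have h2 : p ≫ m = pushout.inl a f ≫ x := by
      have := pushout.inl a f ≫= hm
      rw [← assoc, pushout.inl_desc] at this; exact this
    rw [← cancel_epi p, h2, (h.factor_desc _ h1).choose_spec]

/-- Quotient ses: given a ses `0 → W → Z → B → 0`, a ses `0 → A₀ → B → C' → 0` and a lift
`v : A₀ ⟶ Z` of `a`, we get a ses `0 → W → Z/A₀ → C' → 0`. -/
lemma isSes_quot {W Z B A₀ C' : A} {w : W ⟶ Z} {q : Z ⟶ B} (hζ : IsSes w q)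
    {a : A₀ ⟶ B} {c : B ⟶ C'} (hB : IsSes a c) {v : A₀ ⟶ Z} (hv : v ≫ q = a) :
    IsSes (w ≫ cokernel.π v)
      (cokernel.desc v (q ≫ c) (by rw [← assoc, hv, hB.w])) := by
  have hma := hB.mono
  have hmw := hζ.mono
  have hmv : Mono v := by
    rw [← hv] at hma
    exact mono_of_mono v q
  have hsesv : IsSes v (cokernel.π v) := isSes_cokernel v
  have hwmono : Mono (w ≫ cokernel.π v) := by
    rw [Preadditive.mono_iff_cancel_zero]
    intro Y z hz
    rw [← assoc] at hz
    obtain ⟨y, hy⟩ := hsesv.factor_lift (z ≫ w) hz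
    have hy0 : y ≫ a = 0 := by
      rw [← hv, ← assoc, hy, assoc, hζ.w, comp_zero]
    have : y = 0 := by
      rw [← cancel_mono a, hy0, zero_comp]
    rw [this, zero_comp] at hy
    rw [← cancel_mono w, zero_comp, hy]
  have hepi : Epi (cokernel.desc v (q ≫ c) (by rw [← assoc, hv, hB.w]) :
      cokernel v ⟶ C') := by
    have hq := hζ.epi
    have hc := hB.epi
    have : cokernel.π v ≫ cokernel.desc v (q ≫ c) (by rw [← assoc, hv, hB.w]) = q ≫ c :=
      cokernel.π_desc _ _ _
    have : Epi (q ≫ c) := epi_comp q c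
    exact epi_of_epi_fac (cokernel.π_desc _ _ _)
  have hw0 : (w ≫ cokernel.π v) ≫ cokernel.desc v (q ≫ c) (by rw [← assoc, hv, hB.w]) = 0 := by
    rw [assoc, cokernel.π_desc, ← assoc, hζ.w, zero_comp]
  refine ⟨hw0, ?_⟩
  refine ShortComplex.ShortExact.mk' ?_ hwmono hepi
  apply ShortComplex.exact_of_g_is_cokernel
  haveI : Epi (cokernel.desc v (q ≫ c) (by rw [← assoc, hv, hB.w]) : cokernel v ⟶ C') := hepi
  refine CokernelCofork.IsColimit.ofπ' _ _ ?_
  intro Y x hx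
  have h1 : w ≫ cokernel.π v ≫ x = 0 := by rw [← assoc]; exact hx
  have hy₁ := (hζ.factor_desc _ h1).choose_spec
  have h2 : a ≫ (hζ.factor_desc _ h1).choose = 0 := by
    rw [← hv, assoc, hy₁, ← assoc, cokernel.condition, zero_comp]
  have h3 := (hB.factor_desc _ h2).choose_spec
  refine ⟨(hB.factor_desc _ h2).choose, ?_⟩
  rw [← cancel_epi (cokernel.π v), ← assoc, cokernel.π_desc, assoc, h3, hy₁]

/-- The canonical presentation `0 → E → K ⊞ T' → pushout b t → 0`. -/
lemma isSes_pushoutBiprod {E K T' : A} (b : E ⟶ K) (t : E ⟶ T') [Mono t] :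
    IsSes (biprod.lift b (-t)) (biprod.desc (pushout.inl b t) (pushout.inr b t)) := by
  have hw0 : biprod.lift b (-t) ≫ biprod.desc (pushout.inl b t) (pushout.inr b t) = 0 := by
    rw [biprod.lift_desc, Preadditive.neg_comp, pushout.condition]
    exact add_neg_cancel _
  refine ⟨hw0, ?_⟩
  have hmono : Mono (biprod.lift b (-t)) := by
    rw [Preadditive.mono_iff_cancel_zero]
    intro Y z hz
    have h1 : z ≫ t = 0 := by
      have := hz =≫ biprod.snd
      simpa [neg_eq_zero] using this
    rw [← cancel_mono t, h1, zero_comp]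
  have hepi : Epi (biprod.desc (pushout.inl b t) (pushout.inr b t)) := by
    rw [Preadditive.epi_iff_cancel_zero]
    intro Y x hx
    have h1 : pushout.inl b t ≫ x = 0 := by
      have := biprod.inl ≫= hx
      simpa using this
    have h2 : pushout.inr b t ≫ x = 0 := by
      have := biprod.inr ≫= hx
      simpa using this
    apply pushout.hom_ext <;> simp [h1, h2]
  refine ShortComplex.ShortExact.mk' ?_ hmono hepi
  apply ShortComplex.exact_of_g_is_cokernel
  haveI : Epi (biprod.desc (pushout.inl b t) (pushout.inr b t)) := hepi
  refine CokernelCofork.IsColimit.ofπ' _ _ ?_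
  intro Y x hx
  have hcomm : b ≫ (biprod.inl ≫ x) = t ≫ (biprod.inr ≫ x) := by
    have : (b ≫ biprod.inl + (-t) ≫ biprod.inr) ≫ x = 0 := by
      rw [← biprod.lift_eq]; exact hx
    simp only [Preadditive.add_comp, Preadditive.neg_comp, assoc] at this
    rwa [add_neg_eq_zero] at this
  refine ⟨pushout.desc (biprod.inl ≫ x) (biprod.inr ≫ x) hcomm, ?_⟩
  apply biprod.hom_ext' <;> simp
  · exact pushout.inl_desc _ _ _
  · exact pushout.inr_desc _ _ _

/-- Lift a map along the epi of a ses, provided `Ext¹(source, kernel) = 0`. -/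
lemma Ext1Zero.lift_of_epi {W E B Y : A} (hext : Ext1Zero Y W) {w : W ⟶ E} {q : E ⟶ B}
    (h : IsSes w q) (f : Y ⟶ B) : ∃ g : Y ⟶ E, g ≫ q = f := by
  have := h.epi
  obtain ⟨s, hs⟩ := hext _ _ (isSes_pullback h f)
  refine ⟨s ≫ pullback.fst q f, ?_⟩
  rw [assoc, pullback.condition, ← assoc, hs, id_comp]

/-- Extend a map along the mono of a ses, provided `Ext¹(cokernel, target) = 0`. -/
lemma Ext1Zero.extend_of_mono {K P X H : A} {ι : K ⟶ P} {π : P ⟶ X} (h : IsSes ι π)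
    (hext : Ext1Zero X H) (u : K ⟶ H) : ∃ g : P ⟶ H, ι ≫ g = u := by
  have := h.mono
  have hses := isSes_pushout h u
  obtain ⟨s, hs⟩ := hext _ _ hses
  obtain ⟨r, hr⟩ := hses.retraction_of_section hs
  refine ⟨pushout.inl ι u ≫ r, ?_⟩
  rw [← assoc, pushout.condition, assoc, hr, comp_id]

lemma ext1Zero_of_projective {X W : A} (hX : Projective X) : Ext1Zero X W := by
  intro E i p hses
  have := hses.epi
  haveI := hX
  exact ⟨Projective.factorThru (𝟙 X) p, Projective.factorThru_comp _ _⟩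

/-- `Ext¹(-, W) = 0` is closed under extensions. -/
lemma ext1Zero_of_extension {A₀ B C' W : A} {a : A₀ ⟶ B} {c : B ⟶ C'} (hB : IsSes a c)
    (h₁ : Ext1Zero A₀ W) (h₂ : Ext1Zero C' W) : Ext1Zero B W := by
  intro Z w q hζ
  have hma := hB.mono
  have hmw := hζ.mono
  obtain ⟨v, hv⟩ := h₁.lift_of_epi hζ a
  have hmv : Mono v := by
    have := hB.mono; rw [← hv] at this; exact mono_of_mono v q
  have hquot := isSes_quot hζ hB hv
  obtain ⟨τ, hτ⟩ := h₂ _ _ hquot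
  have hsesv : IsSes v (cokernel.π v) := isSes_cokernel v
  have hR := isSes_pullback hsesv τ
  set i' : A₀ ⟶ pullback (cokernel.π v) τ :=
    pullback.lift v 0 (by rw [hsesv.w, zero_comp]) with hi'
  set ψ : pullback (cokernel.π v) τ ⟶ B := pullback.fst (cokernel.π v) τ ≫ q with hψ
  have hiψ : i' ≫ ψ = a := by
    rw [hψ, hi', ← assoc, pullback.lift_fst, hv]
  have hqc : q ≫ c = cokernel.π v ≫ cokernel.desc v (q ≫ c) (by rw [← assoc, hv, hB.w]) :=
    (cokernel.π_desc _ _ _).symm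
  have hψc : ψ ≫ c = pullback.snd (cokernel.π v) τ := by
    rw [hψ, assoc, hqc, ← assoc, pullback.condition, assoc, hτ, comp_id]
  have hmψ : Mono ψ := by
    rw [Preadditive.mono_iff_cancel_zero]
    intro Y z hz
    have hzsnd : z ≫ pullback.snd (cokernel.π v) τ = 0 := by
      rw [← hψc, ← assoc, hz, zero_comp]
    obtain ⟨y, hy⟩ := hR.factor_lift z hzsnd
    have hya : y ≫ a = 0 := by rw [← hiψ, ← assoc, hy, hz]
    have : y = 0 := by rw [← cancel_mono a, hya, zero_comp]
    rw [← hy, this, zero_comp]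
  have heψ : Epi ψ := by
    rw [Preadditive.epi_iff_cancel_zero]
    intro Y x hx
    have hax : a ≫ x = 0 := by rw [← hiψ, assoc, hx, comp_zero]
    obtain ⟨x', hx'⟩ := hB.factor_desc x hax
    have hsnd : pullback.snd (cokernel.π v) τ ≫ x' = 0 := by
      rw [← hψc, assoc, hx', hx]
    have hesnd := hR.epi
    have : x' = 0 := by rw [← cancel_epi (pullback.snd (cokernel.π v) τ), hsnd, comp_zero]
    rw [← hx', this, comp_zero]
  haveI := hmψ; haveI := heψ
  haveI : IsIso ψ := isIso_of_mono_of_epi ψ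
  refine ⟨inv ψ ≫ pullback.fst (cokernel.π v) τ, ?_⟩
  rw [assoc, ← hψ, IsIso.inv_hom_id]

section TorsionCotorsion

variable {C T F : Set A}

lemma IsTorsionPair.mem_of_hom_zero (ht : IsTorsionPair T F) {X : A}
    (hX : ∀ F' ∈ F, ∀ f : X ⟶ F', f = 0) : X ∈ T := by
  obtain ⟨tX, fX, i, p, htX, hfX, hses⟩ := ht.seq X
  have hp : p = 0 := hX fX hfX p
  have hmono := hses.mono
  have hepi : Epi i := hses.exact.epi_f hp
  haveI := hmono; haveI := hepi
  haveI : IsIso i := isIso_of_mono_of_epi i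
  exact ht.isoClosed_torsion (asIso i) htX

lemma IsTorsionPair.quot_mem (ht : IsTorsionPair T F) {X Y : A} (hX : X ∈ T)
    (p : X ⟶ Y) (hp : Epi p) : Y ∈ T := by
  apply ht.mem_of_hom_zero
  intro F' hF' f
  have h0 : p ≫ f = 0 := ht.hom_zero hX hF' _
  haveI := hp
  rw [← cancel_epi p, h0, comp_zero]

lemma IsTorsionPair.ext_mem (ht : IsTorsionPair T F) {X Y Z : A} {i : X ⟶ Y} {p : Y ⟶ Z}
    (hses : IsSes i p) (hX : X ∈ T) (hZ : Z ∈ T) : Y ∈ T := by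
  apply ht.mem_of_hom_zero
  intro F' hF' f
  have h0 : i ≫ f = 0 := ht.hom_zero hX hF' _
  obtain ⟨g, hg⟩ := hses.factor_desc f h0
  rw [← hg, ht.hom_zero hZ hF' g, comp_zero]

lemma IsTorsionPair.retract_mem (ht : IsTorsionPair T F) {X Y : A} (hX : X ∈ T)
    (s : Y ⟶ X) (r : X ⟶ Y) (hsr : s ≫ r = 𝟙 Y) : Y ∈ T := by
  apply ht.mem_of_hom_zero
  intro F' hF' f
  rw [← id_comp f, ← hsr, assoc, ht.hom_zero hX hF' (r ≫ f), comp_zero]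

lemma IsCotorsionPair.memC_ext (hct : IsCotorsionPair C T) {X : A} (hX : X ∈ C) :
    ∀ Y ∈ T, Ext1Zero X Y := by
  rw [hct.left_eq] at hX
  exact hX

lemma IsCotorsionPair.memC_of (hct : IsCotorsionPair C T) {X : A}
    (hX : ∀ Y ∈ T, Ext1Zero X Y) : X ∈ C := by
  rw [hct.left_eq]
  exact hX

/-- The key lemma: any object of `C` has projective dimension at most one. -/
lemma pdLeOne_of_memC [EnoughProjectives A] (hct : IsCotorsionPair C T)
    (ht : IsTorsionPair T F) {X : A} (hX : X ∈ C) : PdLeOne X := by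
  set P := Projective.over X with hP
  set π : P ⟶ X := Projective.π X with hπ
  haveI : Epi π := inferInstance
  set K := kernel π with hK
  set ι : K ⟶ P := kernel.ι π with hι
  have hθ : IsSes ι π := isSes_kernel π
  have hXext : ∀ Y ∈ T, Ext1Zero X Y := hct.memC_ext hX
  -- every short exact sequence ending in K splits
  have hsplit : ∀ (M E' : A) (m : M ⟶ E') (b : E' ⟶ K), IsSes m b →
      ∃ s : K ⟶ E', s ≫ b = 𝟙 K := by
    intro M E' m b hmb
    obtain ⟨T_E, C_E, t, h₀, hT_E, _, ses_t⟩ := hct.seq₂ E'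
    haveI hmt : Mono t := ses_t.mono
    haveI hbe : Epi b := hmb.epi
    have hinr_epi : Epi (pushout.inr b t) := by
      constructor
      intro Y x y hxy
      have h1 : pushout.inl b t ≫ x = pushout.inl b t ≫ y := by
        rw [← cancel_epi b, ← assoc, ← assoc, pushout.condition, assoc, assoc, hxy]
      exact pushout.hom_ext h1 hxy
    have hH_T : pushout b t ∈ T := ht.quot_mem hT_E (pushout.inr b t) hinr_epi
    obtain ⟨g, hg⟩ := (hXext _ hH_T).extend_of_mono hθ (pushout.inl b t)
    haveI : Projective P := inferInstance
    haveI := hinr_epi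
    obtain ⟨g', hg'⟩ : ∃ g' : P ⟶ T_E, g' ≫ pushout.inr b t = g :=
      ⟨Projective.factorThru g (pushout.inr b t), Projective.factorThru_comp _ _⟩
    have hpres := isSes_pushoutBiprod b t
    have hz0 : biprod.lift (𝟙 K) (-(ι ≫ g')) ≫
        biprod.desc (pushout.inl b t) (pushout.inr b t) = 0 := by
      rw [biprod.lift_desc, id_comp, Preadditive.neg_comp, assoc, hg', hg]
      exact add_neg_cancel _
    obtain ⟨s, hs⟩ := hpres.factor_lift (biprod.lift (𝟙 K) (-(ι ≫ g'))) hz0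
    refine ⟨s, ?_⟩
    have h2 := hs =≫ biprod.fst
    simpa using h2
  have hKproj : Projective K := by
    set QK := Projective.over K with hQK
    set πK : QK ⟶ K := Projective.π K with hπK
    haveI : Epi πK := inferInstance
    have hsesK : IsSes (kernel.ι πK) πK := isSes_kernel πK
    obtain ⟨sK, hsK⟩ := hsplit _ _ (kernel.ι πK) πK hsesK
    constructor
    intro X' E' f e he
    haveI := he
    haveI : Projective QK := inferInstance
    refine ⟨sK ≫ Projective.factorThru (πK ≫ f) e, ?_⟩
    rw [assoc, Projective.factorThru_comp, ← assoc, hsK, id_comp]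
  exact ⟨K, P, ι, π, hKproj, inferInstance, hθ⟩

end TorsionCotorsion

/-- For a cotorsion torsion triple `(C, T, F)` in an abelian
category with enough projectives, `C ∩ T` is a tilting subcategory. -/
theorem statement13 [EnoughProjectives A] {C T F : Set A}
    (hct : IsCotorsionPair C T) (ht : IsTorsionPair T F) :
    IsTilting (C ∩ T) := by
  constructor
  case toIsWeakTilting =>
    constructor
    case sum_mem =>
      intro X Y hX hY
      constructor
      · apply hct.memC_of
        intro W hW
        intro E i p hses
        obtain ⟨gX, hgX⟩ := (hct.memC_ext hX.1 W hW).lift_of_epi hses biprod.inl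
        obtain ⟨gY, hgY⟩ := (hct.memC_ext hY.1 W hW).lift_of_epi hses biprod.inr
        refine ⟨biprod.desc gX gY, ?_⟩
        apply biprod.hom_ext' <;> simp [hgX, hgY]
      · apply ht.mem_of_hom_zero
        intro F' hF' f
        apply biprod.hom_ext'
        · simp [ht.hom_zero hX.2 hF' (biprod.inl ≫ f)]
        · simp [ht.hom_zero hY.2 hF' (biprod.inr ≫ f)]
    case summand_mem =>
      intro X Y hX hret
      obtain ⟨s, r, hsr⟩ := hret
      constructor
      · apply hct.memC_of
        intro W hW
        intro E i p hses
        obtain ⟨g, hg⟩ := (hct.memC_ext hX.1 W hW).lift_of_epi hses r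
        exact ⟨s ≫ g, by rw [assoc, hg, hsr]⟩
      · exact ht.retract_mem hX.2 s r hsr
    case ext1_zero =>
      intro X Y hX hY
      exact hct.memC_ext hX.1 Y hY.2
    case pd_le_one =>
      intro X hX
      exact pdLeOne_of_memC hct ht hX.1
    case coresolution =>
      intro P hP
      obtain ⟨T_P, C_P, i, p, hT_P, hC_P, hses⟩ := hct.seq₂ P
      refine ⟨T_P, C_P, i, p, ⟨?_, hT_P⟩, ⟨hC_P, ?_⟩, hses⟩
      · apply hct.memC_of
        intro W hW
        exact ext1Zero_of_extension hses (ext1Zero_of_projective hP)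
          (hct.memC_ext hC_P W hW)
      · exact ht.quot_mem hT_P p hses.epi
  case contravariantly_finite =>
    intro E
    obtain ⟨tE, fE, ti, tp, htE, hfE, hts⟩ := ht.seq E
    obtain ⟨T', C', aT, bC, hT', hC', hseq1⟩ := hct.seq₁ tE
    refine ⟨C', bC ≫ ti, ⟨hC', ht.ext_mem hseq1 hT' htE⟩, ?_⟩
    intro X' hX' f
    have h0 : f ≫ tp = 0 := ht.hom_zero hX'.2 hfE _
    obtain ⟨f₁, hf₁⟩ := hts.factor_lift f h0
    obtain ⟨g, hg⟩ := (hct.memC_ext hX'.1 T' hT').lift_of_epi hseq1 f₁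
    exact ⟨g, by rw [← assoc, hg, hf₁]⟩

end Paper
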